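/- arXiv:2505.22819 — 2 statements merged into one kernel-verified Lean document; each statement's English description precedes it below -/
import Mathlib

section
/- For all natural numbers n and i with 0 ≤ i ≤ n, ∑_{k=i}^{n} 2^{n-k} · s(n,k) · S(k,i) = b(n,i), where s(n,k) are the signed Stirling numbers of the first kind, S(k,i) are the Stirling numbers of the second kind, and b(n,i) are the Bessel numbers of the first kind. -/
/-- The signed Stirling numbers of the first kind `s(n,k)`, defined as the
coefficients in the falling factorial expansion
`x(x-1)⋯(x-n+1) = ∑_{k=0}^{n} s(n,k) xᵏ`. -/
noncomputable def stirlingFirst (n k : ℕ) : ℤ :=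
  (descPochhammer ℤ n).coeff k

/-- The Stirling numbers of the second kind `S(n,k)`, counting the partitions of an
`n`-element set into `k` nonempty blocks, defined via the standard recurrence
`S(n+1,k+1) = (k+1)·S(n,k+1) + S(n,k)` with `S(0,0) = 1`. -/
def stirlingSecond : ℕ → ℕ → ℕ
  | 0, 0 => 1
  | 0, _ + 1 => 0
  | _ + 1, 0 => 0
  | n + 1, k + 1 => (k + 1) * stirlingSecond n (k + 1) + stirlingSecond n k

/-- The Bessel numbers of the first kind:
`b(n,k) = (-1)^{n-k} (2n-k-1)! / (2^{n-k} (k-1)! (n-k)!)` for `1 ≤ k ≤ n`,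
`b(0,0) = 1`, `b(n,0) = 0` for `n ≥ 1`, and `b(n,k) = 0` for `n < k`. -/
def besselFirst (n k : ℕ) : ℚ :=
  if k = 0 then (if n = 0 then 1 else 0)
  else if k ≤ n then
    (-1) ^ (n - k) * (Nat.factorial (2 * n - k - 1)) /
      (2 ^ (n - k) * (Nat.factorial (k - 1)) * (Nat.factorial (n - k)))
  else 0

lemma stirlingFirst_succ (n k : ℕ) :
    stirlingFirst (n+1) (k+1) = stirlingFirst n k - n * stirlingFirst n (k+1) := by
  unfold stirlingFirst
  rw [descPochhammer_succ_right]
  have hn : ((n : ℕ) : Polynomial ℤ) = Polynomial.C (n : ℤ) := by simp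
  rw [hn, mul_sub, Polynomial.coeff_sub, Polynomial.coeff_mul_X, Polynomial.coeff_mul_C]
  ring

lemma stirlingFirst_zero (n : ℕ) : stirlingFirst (n+1) 0 = 0 := by
  unfold stirlingFirst
  rw [Polynomial.coeff_zero_eq_eval_zero]
  exact descPochhammer_ne_zero_eval_zero ℤ (Nat.succ_ne_zero n)

lemma stirlingFirst_top (n k : ℕ) (h : n < k) : stirlingFirst n k = 0 := by
  unfold stirlingFirst
  exact Polynomial.coeff_eq_zero_of_natDegree_lt (by rwa [descPochhammer_natDegree])

lemma stirlingSecond_eq_zero : ∀ k i : ℕ, k < i → stirlingSecond k i = 0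
  | 0, _ + 1, _ => rfl
  | k + 1, i + 1, h => by
    have h1 : k < i + 1 := by omega
    have h2 : k < i := by omega
    show (i + 1) * stirlingSecond k (i + 1) + stirlingSecond k i = 0
    rw [stirlingSecond_eq_zero k (i+1) h1, stirlingSecond_eq_zero k i h2]
    simp

noncomputable def g (n i : ℕ) : ℚ :=
  ∑ k ∈ Finset.range (n+1), 2^(n-k) * (stirlingFirst n k : ℚ) * (stirlingSecond k i : ℚ)

lemma gT (n i : ℕ) :
    ∑ k ∈ Finset.range (n+1), 2^(n-k) * (stirlingFirst n (k+1) : ℚ) * (stirlingSecond (k+1) i : ℚ)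
      = 2 * g n i - 2^(n+1) * (stirlingFirst n 0 : ℚ) * (stirlingSecond 0 i : ℚ) := by
  have h := Finset.sum_range_succ'
    (fun k => (2:ℚ)^(n+1-k) * (stirlingFirst n k : ℚ) * (stirlingSecond k i : ℚ)) (n+1)
  have h2 : ∑ k ∈ Finset.range (n+1+1),
      (2:ℚ)^(n+1-k) * (stirlingFirst n k : ℚ) * (stirlingSecond k i : ℚ) = 2 * g n i := by
    rw [Finset.sum_range_succ]
    have : stirlingFirst n (n+1) = 0 := stirlingFirst_top n (n+1) (by omega)
    rw [this]
    unfold g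
    rw [Finset.mul_sum]
    simp only [Int.cast_zero, mul_zero, zero_mul, add_zero]
    refine Finset.sum_congr rfl fun k hk => ?_
    have hk' : k ≤ n := by simpa [Nat.lt_succ_iff] using hk
    have : n + 1 - k = (n - k) + 1 := by omega
    rw [this, pow_succ]
    ring
  rw [h2] at h
  simp only [Nat.succ_sub_succ] at h
  simp only [Nat.sub_zero] at h
  linarith [h]

lemma g_succ (n j : ℕ) : g (n+1) (j+1) = g n j + ((j:ℚ)+1-2*n) * g n (j+1) := by
  have key : ∀ k ∈ Finset.range (n+1),
      (2:ℚ)^(n+1-(k+1)) * (stirlingFirst (n+1) (k+1) : ℚ) * (stirlingSecond (k+1) (j+1) : ℚ)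
      = (2^(n-k) * (stirlingFirst n k : ℚ) * (stirlingSecond k j : ℚ)
          + ((j:ℚ)+1) * (2^(n-k) * (stirlingFirst n k : ℚ) * (stirlingSecond k (j+1) : ℚ)))
        - (n:ℚ) * (2^(n-k) * (stirlingFirst n (k+1) : ℚ) * (stirlingSecond (k+1) (j+1) : ℚ)) := by
    intro k _
    have hS : (stirlingSecond (k+1) (j+1) : ℚ)
        = ((j:ℚ)+1) * (stirlingSecond k (j+1) : ℚ) + (stirlingSecond k j : ℚ) := by
      rw [show stirlingSecond (k+1) (j+1)
        = (j + 1) * stirlingSecond k (j + 1) + stirlingSecond k j from rfl]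
      push_cast
      ring
    have hs : (stirlingFirst (n+1) (k+1) : ℚ)
        = (stirlingFirst n k : ℚ) - (n:ℚ) * (stirlingFirst n (k+1) : ℚ) := by
      rw [stirlingFirst_succ]; push_cast; ring
    rw [Nat.succ_sub_succ, hs]
    rw [hS]
    ring
  unfold g
  rw [Finset.sum_range_succ']
  rw [Finset.sum_congr rfl key]
  have hz : (2:ℚ)^(n+1-0) * (stirlingFirst (n+1) 0 : ℚ) * (stirlingSecond 0 (j+1) : ℚ) = 0 := by
    rw [stirlingFirst_zero]; simp
  rw [hz, add_zero, Finset.sum_sub_distrib, Finset.sum_add_distrib, ← Finset.mul_sum,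
    ← Finset.mul_sum, gT]
  have hz2 : (stirlingSecond 0 (j+1) : ℚ) = 0 := by
    rw [show stirlingSecond 0 (j+1) = 0 from rfl]; simp
  rw [hz2]
  unfold g
  ring

lemma g_zero_succ (n : ℕ) : g (n+1) 0 = 0 := by
  unfold g
  refine Finset.sum_eq_zero fun k hk => ?_
  match k with
  | 0 => rw [stirlingFirst_zero]; simp
  | k + 1 => rw [show stirlingSecond (k+1) 0 = 0 from rfl]; simp

lemma g_zero_left : ∀ i, g 0 i = besselFirst 0 i := by
  intro i
  match i with
  | 0 => simp [g, stirlingFirst, besselFirst, stirlingSecond, descPochhammer]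
  | i + 1 =>
    simp [g, besselFirst, show stirlingSecond 0 (i+1) = 0 from rfl]

lemma bessel_val (N K : ℕ) (h0 : K ≠ 0) (h1 : K ≤ N) :
    besselFirst N K = (-1) ^ (N - K) * (Nat.factorial (2 * N - K - 1)) /
      (2 ^ (N - K) * (Nat.factorial (K - 1)) * (Nat.factorial (N - K))) := by
  rw [besselFirst, if_neg h0, if_pos h1]

lemma fac_cast_succ (a : ℕ) : (Nat.factorial (a+1) : ℚ) = (a+1) * Nat.factorial a := by
  rw [Nat.factorial_succ]; push_cast; ring

lemma bessel_rec (n j : ℕ) :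
    besselFirst (n+1) (j+1) = besselFirst n j + ((j:ℚ)+1-2*n) * besselFirst n (j+1) := by
  rcases lt_trichotomy j n with hlt | rfl | hgt
  · match j, hlt with
    | 0, h =>
      obtain ⟨d, rfl⟩ : ∃ d, n = d + 1 := ⟨n - 1, by omega⟩
      have L : besselFirst (d+1+1) (0+1)
          = (-1:ℚ)^(d+1) * (Nat.factorial (2*d+2)) / (2^(d+1) * 1 * (Nat.factorial (d+1))) := by
        rw [bessel_val _ _ (by omega) (by omega)]
        simp only [show d+1+1-(0+1) = d+1 from by omega,
          show 2*(d+1+1)-(0+1)-1 = 2*d+2 from by omega, show 0+1-1 = 0 from rfl,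
          Nat.factorial_zero, Nat.cast_one]
      have R0 : besselFirst (d+1) 0 = 0 := by simp [besselFirst]
      have R1 : besselFirst (d+1) (0+1)
          = (-1:ℚ)^d * (Nat.factorial (2*d)) / (2^d * 1 * (Nat.factorial d)) := by
        rw [bessel_val _ _ (by omega) (by omega)]
        simp only [show d+1-(0+1) = d from by omega,
          show 2*(d+1)-(0+1)-1 = 2*d from by omega, show 0+1-1 = 0 from rfl,
          Nat.factorial_zero, Nat.cast_one]
      rw [L, R0, R1]
      rw [show 2*d+2 = (2*d+1)+1 from rfl, fac_cast_succ, fac_cast_succ, fac_cast_succ]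
      have h2 : ((2:ℚ))^d ≠ 0 := by positivity
      have h3 : (Nat.factorial (2*d) : ℚ) ≠ 0 := by
        exact_mod_cast Nat.factorial_ne_zero _
      have h4 : (Nat.factorial d : ℚ) ≠ 0 := by exact_mod_cast Nat.factorial_ne_zero _
      rw [pow_succ, pow_succ]
      push_cast
      field_simp
      ring
    | m+1, h =>
      obtain ⟨d, rfl⟩ : ∃ d, n = m + d + 2 := ⟨n - m - 2, by omega⟩
      have L : besselFirst (m+d+2+1) (m+1+1)
          = (-1:ℚ)^(d+1) * (Nat.factorial (m+2*d+3)) /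
            (2^(d+1) * (Nat.factorial (m+1)) * (Nat.factorial (d+1))) := by
        rw [bessel_val _ _ (by omega) (by omega)]
        simp only [show m+d+2+1-(m+1+1) = d+1 from by omega,
          show 2*(m+d+2+1)-(m+1+1)-1 = m+2*d+3 from by omega,
          show m+1+1-1 = m+1 from rfl]
      have R1 : besselFirst (m+d+2) (m+1)
          = (-1:ℚ)^(d+1) * (Nat.factorial (m+2*d+2)) /
            (2^(d+1) * (Nat.factorial m) * (Nat.factorial (d+1))) := by
        rw [bessel_val _ _ (by omega) (by omega)]
        simp only [show m+d+2-(m+1) = d+1 from by omega,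
          show 2*(m+d+2)-(m+1)-1 = m+2*d+2 from by omega,
          show m+1-1 = m from rfl]
      have R2 : besselFirst (m+d+2) (m+1+1)
          = (-1:ℚ)^d * (Nat.factorial (m+2*d+1)) /
            (2^d * (Nat.factorial (m+1)) * (Nat.factorial d)) := by
        rw [bessel_val _ _ (by omega) (by omega)]
        simp only [show m+d+2-(m+1+1) = d from by omega,
          show 2*(m+d+2)-(m+1+1)-1 = m+2*d+1 from by omega,
          show m+1+1-1 = m+1 from rfl]
      rw [L, R1, R2]
      rw [show m+2*d+3 = (m+2*d+2)+1 from rfl, fac_cast_succ,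
        show m+2*d+2 = (m+2*d+1)+1 from rfl, fac_cast_succ,
        show (Nat.factorial (m+1) : ℚ) = (m+1) * Nat.factorial m from fac_cast_succ m,
        show (Nat.factorial (d+1) : ℚ) = (d+1) * Nat.factorial d from fac_cast_succ d]
      have h2 : ((2:ℚ))^d ≠ 0 := by positivity
      have h3 : (Nat.factorial (m+2*d+1) : ℚ) ≠ 0 := by
        exact_mod_cast Nat.factorial_ne_zero _
      have h4 : (Nat.factorial d : ℚ) ≠ 0 := by exact_mod_cast Nat.factorial_ne_zero _
      have h5 : (Nat.factorial m : ℚ) ≠ 0 := by exact_mod_cast Nat.factorial_ne_zero _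
      rw [pow_succ, pow_succ]
      push_cast
      field_simp
      ring
  · have L : besselFirst (j+1) (j+1)
        = (-1:ℚ)^0 * (Nat.factorial j) / (2^0 * (Nat.factorial j) * 1) := by
      rw [bessel_val _ _ (by omega) (by omega)]
      simp only [show j+1-(j+1) = 0 from by omega, show 2*(j+1)-(j+1)-1 = j from by omega,
        show j+1-1 = j from rfl, Nat.factorial_zero, Nat.cast_one]
    have R2 : besselFirst j (j+1) = 0 := by
      rw [besselFirst, if_neg (by omega), if_neg (by omega)]
    have hfac : (Nat.factorial j : ℚ) ≠ 0 := by exact_mod_cast Nat.factorial_ne_zero _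
    rw [L, R2]
    match j with
    | 0 => simp [besselFirst]
    | m+1 =>
      have R1 : besselFirst (m+1) (m+1)
          = (-1:ℚ)^0 * (Nat.factorial m) / (2^0 * (Nat.factorial m) * 1) := by
        rw [bessel_val _ _ (by omega) (by omega)]
        simp only [show m+1-(m+1) = 0 from by omega, show 2*(m+1)-(m+1)-1 = m from by omega,
          show m+1-1 = m from rfl, Nat.factorial_zero, Nat.cast_one]
      rw [R1]
      have hm : (Nat.factorial m : ℚ) ≠ 0 := by exact_mod_cast Nat.factorial_ne_zero _
      field_simp
      ring
  · have L : besselFirst (n+1) (j+1) = 0 := by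
      rw [besselFirst, if_neg (by omega), if_neg (by omega)]
    have R1 : besselFirst n j = 0 := by
      rw [besselFirst, if_neg (by omega), if_neg (by omega)]
    have R2 : besselFirst n (j+1) = 0 := by
      rw [besselFirst, if_neg (by omega), if_neg (by omega)]
    rw [L, R1, R2]
    ring

lemma g_eq : ∀ n i, g n i = besselFirst n i := by
  intro n
  induction n with
  | zero => exact g_zero_left
  | succ n ih =>
    intro i
    match i with
    | 0 =>
      rw [g_zero_succ]
      simp [besselFirst]
    | j + 1 =>
      rw [g_succ, ih j, ih (j+1), bessel_rec]

theorem stmt2 (n i : ℕ) (h : i ≤ n) :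
    ∑ k ∈ Finset.Icc i n, 2 ^ (n - k) * (stirlingFirst n k : ℚ) * (stirlingSecond k i : ℚ) =
      besselFirst n i := by
  rw [← g_eq]
  unfold g
  refine Finset.sum_subset ?_ ?_
  · intro k hk
    simp only [Finset.mem_Icc] at hk
    simp only [Finset.mem_range]
    omega
  · intro k hk hk2
    simp only [Finset.mem_range] at hk
    simp only [Finset.mem_Icc] at hk2
    have : k < i := by omega
    rw [stirlingSecond_eq_zero k i this]
    simp
end

section
/- For every natural number n and every real (or rational) t, the product t(t-2)(t-4)···(t-2(n-1)) = ∏_{j=0}^{n-1}(t-2j) equals ∑_{k=0}^{n} b(n,k) · (t)_k, where (t)_k = t(t-1)···(t-k+1) is the falling factorial and b(n,k) are the Bessel numbers of the first kind. -/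
/-- The falling factorial `(t)_k = t(t-1)⋯(t-k+1)`, with `(t)_0 = 1`. -/
def fallingFactorial (t : ℚ) (k : ℕ) : ℚ :=
  ∏ j ∈ Finset.range k, (t - j)

lemma besselFirst_succ (j m : ℕ) :
    besselFirst (j + 1 + m) (j + 1) =
      (-1 : ℚ) ^ m * (Nat.factorial (j + 2 * m)) /
        (2 ^ m * (Nat.factorial j) * (Nat.factorial m)) := by
  have h1 : j + 1 + m - (j + 1) = m := by omega
  have h2 : 2 * (j + 1 + m) - (j + 1) - 1 = j + 2 * m := by omega
  have h3 : j + 1 - 1 = j := by omega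
  simp [besselFirst, h1, h2, h3]

lemma besselFirst_diag (m : ℕ) : besselFirst m m = 1 := by
  cases m with
  | zero => simp [besselFirst]
  | succ j =>
    have := besselFirst_succ j 0
    simp only [Nat.add_zero, Nat.mul_zero, pow_zero, one_mul, Nat.factorial_zero] at this
    rw [this]
    rw [div_eq_one_iff_eq]
    · push_cast; ring
    · positivity

lemma besselFirst_gt {n k : ℕ} (h : n < k) : besselFirst n k = 0 := by
  have hk : k ≠ 0 := by omega
  have : ¬ k ≤ n := by omega
  simp [besselFirst, hk, this]

lemma besselFirst_zero (n : ℕ) (hn : n ≠ 0) : besselFirst n 0 = 0 := by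
  simp [besselFirst, hn]

lemma besselFirst_rec (n k : ℕ) (hk : k ≤ n) :
    besselFirst (n + 1) (k + 1) =
      besselFirst n k + ((k : ℚ) + 1 - 2 * n) * besselFirst n (k + 1) := by
  rcases eq_or_lt_of_le hk with rfl | hlt
  · -- k = n
    rw [besselFirst_diag, besselFirst_diag, besselFirst_gt (by omega)]
    ring
  · -- k + 1 ≤ n
    rcases k with _ | j
    · -- k = 0, n ≥ 1
      obtain ⟨m, rfl⟩ : ∃ m, n = 1 + m := ⟨n - 1, by omega⟩
      have e1 : besselFirst (1 + m + 1) 1 = besselFirst (0 + 1 + (m + 1)) (0 + 1) := by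
        congr 1 <;> omega
      have e2 : besselFirst (1 + m) 1 = besselFirst (0 + 1 + m) (0 + 1) := by
        congr 1 <;> omega
      rw [e1, e2, besselFirst_succ, besselFirst_succ, besselFirst_zero _ (by omega)]
      have f1 : Nat.factorial (0 + 2 * (m + 1)) = (2*m+2) * ((2*m+1) * Nat.factorial (0 + 2*m)) := by
        have : 0 + 2 * (m+1) = (0 + 2*m) + 1 + 1 := by omega
        rw [this, Nat.factorial_succ, Nat.factorial_succ]; ring_nf
      rw [f1]
      have fm : (Nat.factorial m : ℚ) ≠ 0 := by positivity
      have f2 : (2:ℚ)^m ≠ 0 := by positivity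
      rw [Nat.factorial_succ]
      push_cast
      field_simp
      ring
    · -- k = j + 1, j + 2 ≤ n
      obtain ⟨m, rfl⟩ : ∃ m, n = j + 2 + m := ⟨n - j - 2, by omega⟩
      have e1 : besselFirst (j + 2 + m + 1) (j + 1 + 1) =
          besselFirst ((j+1) + 1 + (m+1)) ((j+1) + 1) := by congr 1 <;> omega
      have e2 : besselFirst (j + 2 + m) (j + 1) = besselFirst (j + 1 + (m+1)) (j + 1) := by
        congr 1 <;> omega
      have e3 : besselFirst (j + 2 + m) (j + 1 + 1) =
          besselFirst ((j+1) + 1 + m) ((j+1) + 1) := by congr 1 <;> omega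
      rw [e1, e2, e3, besselFirst_succ, besselFirst_succ, besselFirst_succ]
      have g1 : Nat.factorial ((j+1) + 2 * (m+1)) =
          (j+2*m+3) * ((j+2*m+2) * Nat.factorial (j + 2*m + 1)) := by
        have h : (j+1) + 2*(m+1) = (j + 2*m + 1) + 1 + 1 := by omega
        rw [h, Nat.factorial_succ, Nat.factorial_succ]
      have g2 : Nat.factorial (j + 2 * (m+1)) = (j+2*m+2) * Nat.factorial (j + 2*m + 1) := by
        have h : j + 2*(m+1) = (j + 2*m + 1) + 1 := by omega
        rw [h, Nat.factorial_succ]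
      have g3 : Nat.factorial ((j+1) + 2*m) = Nat.factorial (j + 2*m + 1) := by
        congr 1 <;> omega
      rw [g1, g2, g3, Nat.factorial_succ j, Nat.factorial_succ m]
      have fj : (Nat.factorial j : ℚ) ≠ 0 := by positivity
      have fm : (Nat.factorial m : ℚ) ≠ 0 := by positivity
      have f2 : (2:ℚ)^m ≠ 0 := by positivity
      push_cast
      field_simp
      ring

lemma fallingFactorial_succ (t : ℚ) (k : ℕ) :
    fallingFactorial t (k + 1) = fallingFactorial t k * (t - k) := by
  simp [fallingFactorial, Finset.prod_range_succ]

theorem stmt4 (n : ℕ) (t : ℚ) :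
    ∏ j ∈ Finset.range n, (t - 2 * j) =
      ∑ k ∈ Finset.range (n + 1), besselFirst n k * fallingFactorial t k := by
  induction n with
  | zero => simp [besselFirst, fallingFactorial]
  | succ n ih =>
    rw [Finset.prod_range_succ, ih]
    rw [Finset.sum_range_succ' (fun k => besselFirst (n+1) k * fallingFactorial t k) (n+1)]
    simp only [besselFirst_zero (n+1) (by omega), zero_mul, add_zero]
    have hrec : ∀ k ∈ Finset.range (n+1),
        besselFirst (n+1) (k+1) * fallingFactorial t (k+1) =
          besselFirst n k * fallingFactorial t (k+1) +
            ((k : ℚ) + 1 - 2 * n) * (besselFirst n (k+1) * fallingFactorial t (k+1)) := by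
      intro k hk
      rw [besselFirst_rec n k (by simpa using Nat.lt_succ_iff.mp (Finset.mem_range.mp hk))]
      ring
    rw [Finset.sum_congr rfl hrec, Finset.sum_add_distrib]
    -- LHS: (∑ b(n,k)(t)_k) * (t - 2n)
    have expand : (∑ k ∈ Finset.range (n+1), besselFirst n k * fallingFactorial t k) * (t - 2 * n)
        = ∑ k ∈ Finset.range (n+1), (besselFirst n k * fallingFactorial t (k+1)
            + ((k : ℚ) - 2 * n) * (besselFirst n k * fallingFactorial t k)) := by
      rw [Finset.sum_mul]
      refine Finset.sum_congr rfl fun k hk => ?_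
      rw [fallingFactorial_succ]
      ring
    rw [expand, Finset.sum_add_distrib]
    congr 1
    -- remains: ∑ (k-2n) b(n,k)(t)_k = ∑ (k+1-2n) b(n,k+1)(t)_{k+1}
    set G : ℕ → ℚ := fun k => ((k : ℚ) - 2 * n) * (besselFirst n k * fallingFactorial t k) with hG
    have h1 : ∑ k ∈ Finset.range (n+2), G k = ∑ k ∈ Finset.range (n+1), G (k+1) + G 0 :=
      Finset.sum_range_succ' G (n+1)
    have h2 : ∑ k ∈ Finset.range (n+2), G k = ∑ k ∈ Finset.range (n+1), G k + G (n+1) :=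
      Finset.sum_range_succ G (n+1)
    have hG0 : G 0 = 0 := by
      rcases Nat.eq_zero_or_pos n with rfl | hn
      · simp [hG]
      · simp [hG, besselFirst_zero n (by omega)]
    have hGn : G (n+1) = 0 := by
      simp [hG, besselFirst_gt (Nat.lt_succ_self n)]
    have key : ∑ k ∈ Finset.range (n+1), G k = ∑ k ∈ Finset.range (n+1), G (k+1) := by
      rw [← add_zero (∑ k ∈ Finset.range (n+1), G k), ← hGn, ← h2, h1, hG0, add_zero]
    calc ∑ k ∈ Finset.range (n+1), G k
        = ∑ k ∈ Finset.range (n+1), G (k+1) := key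
      _ = ∑ k ∈ Finset.range (n+1),
            ((k : ℚ) + 1 - 2 * n) * (besselFirst n (k+1) * fallingFactorial t (k+1)) := by
          refine Finset.sum_congr rfl fun k hk => ?_
          simp only [hG]
          push_cast
          ring_nf
end
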